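/- Let n = 2, ν₁, ν₂ > 0, K a strictly concave strictly monotone kernel function, J an upper semicontinuous 2-field function, and let x = (x₁,x₂), y = (y₁,y₂) be regular node systems with x₁ < y₁ < y₂ < x₂. Then m₁(y) < m₁(x), and moreover either m₀(x) < m₀(y) or m₂(x) < m₂(y). In particular intertwining of maxima holds for x and y. -/

import Mathlib

open Set

noncomputable section

/-- A kernel function: `[-1,1] → ℝ ∪ {-∞}`, real-valued and concave on `(-1,0)` and on `(0,1)`,
extended continuously (in `EReal`) to the closed subintervals, so that the endpoint values
(in particular `K 0`) are the one-sided limits. -/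
def KernelFun (K : ℝ → EReal) : Prop :=
  (∀ t, K t ≠ ⊤) ∧
  (∀ t ∈ Ioo (-1:ℝ) 0 ∪ Ioo (0:ℝ) 1, K t ≠ ⊥) ∧
  ConcaveOn ℝ (Ioo (-1:ℝ) 0) (fun t => (K t).toReal) ∧
  ConcaveOn ℝ (Ioo (0:ℝ) 1) (fun t => (K t).toReal) ∧
  ContinuousOn K (Icc (-1:ℝ) 0) ∧
  ContinuousOn K (Icc (0:ℝ) 1)

/-- Monotonicity condition (M): nonincreasing on `(-1,0)`, nondecreasing on `(0,1)`. -/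
def KMonotone (K : ℝ → EReal) : Prop :=
  AntitoneOn K (Ioo (-1:ℝ) 0) ∧ MonotoneOn K (Ioo (0:ℝ) 1)

/-- Strict monotonicity (SM): strictly decreasing on `[-1,0)`, strictly increasing on `(0,1]`. -/
def KStrictMonotone (K : ℝ → EReal) : Prop :=
  StrictAntiOn K (Ico (-1:ℝ) 0) ∧ StrictMonoOn K (Ioc (0:ℝ) 1)

/-- Strict concavity on both `(-1,0)` and `(0,1)`. -/
def KStrictConcave (K : ℝ → EReal) : Prop :=
  StrictConcaveOn ℝ (Ioo (-1:ℝ) 0) (fun t => (K t).toReal) ∧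
  StrictConcaveOn ℝ (Ioo (0:ℝ) 1) (fun t => (K t).toReal)

/-- An `n`-field function: bounded above on `[0,1]`, never `+∞`, and finite at more than `n`
points of `[0,1]`, counting the endpoints `0`, `1` with weight `1/2` only. -/
def NFieldFun (n : ℕ) (J : ℝ → EReal) : Prop :=
  (∀ t, J t ≠ ⊤) ∧
  (∃ M : ℝ, ∀ t ∈ Icc (0:ℝ) 1, J t ≤ (M : EReal)) ∧
  ((∃ S : Finset ℝ, ↑S ⊆ {t ∈ Ioo (0:ℝ) 1 | J t ≠ ⊥} ∧ n + 1 ≤ S.card) ∨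
   ((∃ S : Finset ℝ, ↑S ⊆ {t ∈ Ioo (0:ℝ) 1 | J t ≠ ⊥} ∧ n ≤ S.card) ∧
     (J 0 ≠ ⊥ ∨ J 1 ≠ ⊥)))

/-- The closed simplex: `0 ≤ x₁ ≤ ⋯ ≤ xₙ ≤ 1`. -/
def closedSimplex (n : ℕ) (x : Fin n → ℝ) : Prop :=
  (∀ i, x i ∈ Icc (0:ℝ) 1) ∧ Monotone x

/-- The open simplex: `0 < x₁ < ⋯ < xₙ < 1`. -/
def openSimplex (n : ℕ) (x : Fin n → ℝ) : Prop :=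
  (∀ i, x i ∈ Ioo (0:ℝ) 1) ∧ StrictMono x

/-- Extended node system: `x₀ = 0`, `x₁,…,xₙ`, `x_{n+1} = 1`. -/
def extNodes (n : ℕ) (x : Fin n → ℝ) : Fin (n + 2) → ℝ :=
  Fin.cons 0 (Fin.snoc x 1)

/-- The (weighted) sum of translates function `F(x,t) = J(t) + ∑ νⱼ K(t - xⱼ)`. -/
def sumTrans (n : ℕ) (ν : Fin n → ℝ) (K J : ℝ → EReal) (x : Fin n → ℝ) (t : ℝ) : EReal :=
  J t + ∑ i, (ν i : EReal) * K (t - x i)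

/-- The `j`-th interval maximum `mⱼ(x) = sup_{[xⱼ, xⱼ₊₁]} F(x,·)`. -/
def intMax (n : ℕ) (ν : Fin n → ℝ) (K J : ℝ → EReal) (x : Fin n → ℝ) (j : Fin (n + 1)) :
    EReal :=
  sSup (sumTrans n ν K J x '' Icc (extNodes n x j.castSucc) (extNodes n x j.succ))

/-- A node system is regular (nonsingular) if all interval maxima are finite. -/
def regularNodes (n : ℕ) (ν : Fin n → ℝ) (K J : ℝ → EReal) (x : Fin n → ℝ) : Prop :=
  ∀ j, intMax n ν K J x j ≠ ⊥


open Filter Topology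

lemma usc_exists_max {f : ℝ → EReal} {s : Set ℝ} (hs : IsCompact s) (hne : s.Nonempty)
    (hf : UpperSemicontinuousOn f s) : ∃ a ∈ s, ∀ t ∈ s, f t ≤ f a := by
  by_contra hcon
  push_neg at hcon
  choose! g hg1 hg2 using hcon
  have key : ∀ a : s, ∃ O : Set ℝ, IsOpen O ∧ (a:ℝ) ∈ O ∧ ∀ z ∈ O ∩ s, f z < f (g (a:ℝ)) := by
    rintro ⟨a, ha⟩
    have h1 := hf a ha (f (g a)) (hg2 a ha)
    rw [Filter.eventually_iff, mem_nhdsWithin] at h1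
    obtain ⟨u, hu, hau, hsub⟩ := h1
    exact ⟨u, hu, hau, fun z hz => hsub hz⟩
  choose O hO1 hO2 hO3 using key
  obtain ⟨t, ht⟩ := hs.elim_finite_subcover O hO1
    (fun z hz => Set.mem_iUnion.2 ⟨⟨z, hz⟩, hO2 _⟩)
  have htne : t.Nonempty := by
    obtain ⟨z, hz⟩ := hne
    obtain ⟨i, hi, -⟩ := Set.mem_iUnion₂.1 (ht hz)
    exact ⟨i, hi⟩
  obtain ⟨b, hbt, hb⟩ := t.exists_max_image (fun a : s => f (g (a:ℝ))) htne
  have hgb : g (b:ℝ) ∈ s := hg1 (b:ℝ) b.2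
  obtain ⟨i, hit, hgbO⟩ := Set.mem_iUnion₂.1 (ht hgb)
  exact absurd (hb i hit) (not_le.2 (hO3 i (g (b:ℝ)) ⟨hgbO, hgb⟩))

lemma K_contOn {K : ℝ → EReal} (hK : KernelFun K) : ContinuousOn K (Icc (-1:ℝ) 1) := by
  have hset : Icc (-1:ℝ) 1 = Icc (-1:ℝ) 0 ∪ Icc 0 1 :=
    (Icc_union_Icc_eq_Icc (by norm_num) (by norm_num)).symm
  rw [hset]
  intro s _
  unfold ContinuousWithinAt
  rw [nhdsWithin_union, Filter.tendsto_sup]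
  constructor
  · by_cases h : s ∈ Icc (-1:ℝ) 0
    · exact hK.2.2.2.2.1 s h
    · have h2 : ¬ (𝓝[Icc (-1:ℝ) 0] s).NeBot := fun hnb => h (by
        simpa [isClosed_Icc.closure_eq] using mem_closure_iff_nhdsWithin_neBot.2 hnb)
      rw [Filter.not_neBot] at h2
      rw [h2]; exact tendsto_bot
  · by_cases h : s ∈ Icc (0:ℝ) 1
    · exact hK.2.2.2.2.2 s h
    · have h2 : ¬ (𝓝[Icc (0:ℝ) 1] s).NeBot := fun hnb => h (by
        simpa [isClosed_Icc.closure_eq] using mem_closure_iff_nhdsWithin_neBot.2 hnb)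
      rw [Filter.not_neBot] at h2
      rw [h2]; exact tendsto_bot

lemma contMul {ν : ℝ} (hν : 0 < ν) : Continuous (fun z : EReal => (ν : EReal) * z) := by
  rw [continuous_iff_continuousAt]
  intro z
  have h := EReal.continuousAt_mul (p := ((ν : EReal), z))
    (Or.inl (by simp [hν.ne'])) (Or.inl (by simp [hν.ne']))
    (Or.inl (by simp)) (Or.inl (by simp))
  exact h.comp ((continuous_const.prodMk continuous_id).continuousAt)

lemma mulK_ne_top {ν : ℝ} (hν : 0 < ν) {z : EReal} (hz : z ≠ ⊤) : (ν:EReal) * z ≠ ⊤ := by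
  induction z with
  | bot => rw [EReal.coe_mul_bot_of_pos hν]; exact bot_ne_top
  | coe r => rw [← EReal.coe_mul]; exact EReal.coe_ne_top _
  | top => exact absurd rfl hz

lemma K0_le_neg {K : ℝ → EReal} (hK : KernelFun K) (hSM : KStrictMonotone K) {s : ℝ}
    (hs : s ∈ Ico (-1:ℝ) 0) : K 0 ≤ K s := by
  have hne : (𝓝[Ioo s 0] (0:ℝ)).NeBot := by
    apply mem_closure_iff_nhdsWithin_neBot.1
    rw [closure_Ioo hs.2.ne]
    exact right_mem_Icc.2 hs.2.le
  have hcont : Tendsto K (𝓝[Ioo s 0] 0) (𝓝 (K 0)) := by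
    refine (hK.2.2.2.2.1 0 ⟨by norm_num, le_refl 0⟩).mono_left (nhdsWithin_mono _ ?_)
    exact fun z hz => ⟨hs.1.trans hz.1.le, hz.2.le⟩
  refine le_of_tendsto hcont (eventually_nhdsWithin_of_forall fun z hz => ?_)
  exact (hSM.1 hs ⟨hs.1.trans hz.1.le, hz.2⟩ hz.1).le

lemma K0_lt_neg {K : ℝ → EReal} (hK : KernelFun K) (hSM : KStrictMonotone K) {s : ℝ}
    (hs : s ∈ Ico (-1:ℝ) 0) : K 0 < K s := by
  have h1 : s/2 ∈ Ico (-1:ℝ) 0 := ⟨by nlinarith [hs.1, hs.2], by linarith [hs.2]⟩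
  have h2 : s < s/2 := by linarith [hs.2]
  exact (K0_le_neg hK hSM h1).trans_lt (hSM.1 hs h1 h2)

lemma K0_le_pos {K : ℝ → EReal} (hK : KernelFun K) (hSM : KStrictMonotone K) {s : ℝ}
    (hs : s ∈ Ioc (0:ℝ) 1) : K 0 ≤ K s := by
  have hne : (𝓝[Ioo (0:ℝ) s] (0:ℝ)).NeBot := by
    apply mem_closure_iff_nhdsWithin_neBot.1
    rw [closure_Ioo hs.1.ne]
    exact left_mem_Icc.2 hs.1.le
  have hcont : Tendsto K (𝓝[Ioo (0:ℝ) s] 0) (𝓝 (K 0)) := by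
    refine (hK.2.2.2.2.2 0 ⟨le_refl 0, by norm_num⟩).mono_left (nhdsWithin_mono _ ?_)
    exact fun z hz => ⟨hz.1.le, hz.2.le.trans hs.2⟩
  refine le_of_tendsto hcont (eventually_nhdsWithin_of_forall fun z hz => ?_)
  exact (hSM.2 ⟨hz.1, (hz.2.le).trans hs.2⟩ hs hz.2).le

lemma K0_lt_pos {K : ℝ → EReal} (hK : KernelFun K) (hSM : KStrictMonotone K) {s : ℝ}
    (hs : s ∈ Ioc (0:ℝ) 1) : K 0 < K s := by
  have h1 : s/2 ∈ Ioc (0:ℝ) 1 := ⟨by linarith [hs.1], by linarith [hs.1, hs.2]⟩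
  have h2 : s/2 < s := by linarith [hs.1]
  exact (K0_le_pos hK hSM h1).trans_lt (hSM.2 h1 hs h2)

lemma slope_gap {g : ℝ → ℝ} {α β p q r w : ℝ} (hαp : α ≤ p) (hwβ : w ≤ β)
    (hpq : p < q) (hqr : q < r) (hrw : r < w)
    (hst : StrictConcaveOn ℝ (Ioo α β) g)
    (hcont : ContinuousOn g (Icc p w)) :
    (g w - g r) * (q - p) < (g q - g p) * (w - r) := by
  have hconc := hst.concaveOn
  set m := (q + r)/2 with hm
  have hqm : q < m := by rw [hm]; linarith
  have hmr : m < r := by rw [hm]; linarith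
  have hqmem : q ∈ Ioo α β := ⟨lt_of_le_of_lt hαp hpq, by linarith⟩
  have hrmem : r ∈ Ioo α β := ⟨by linarith, lt_of_lt_of_le hrw hwβ⟩
  have hmmem : m ∈ Ioo α β := ⟨by linarith [hqmem.1], by linarith [hrmem.2]⟩
  have hpw : p < w := by linarith
  have c1 : (g m - g q)/(m - q) ≤ (g q - g p)/(q - p) := by
    have hev : ∀ u ∈ Ioo p q, (g m - g q)/(m - q) ≤ (g q - g u)/(q - u) := by
      intro u hu
      exact hconc.slope_anti_adjacent ⟨lt_of_le_of_lt hαp hu.1, by linarith [hu.2, hqmem.2]⟩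
        hmmem hu.2 hqm
    have hne : (𝓝[Ioo p q] p).NeBot := by
      apply mem_closure_iff_nhdsWithin_neBot.1
      rw [closure_Ioo hpq.ne]
      exact left_mem_Icc.2 hpq.le
    have hgp : Tendsto g (𝓝[Ioo p q] p) (𝓝 (g p)) := by
      refine (hcont p (left_mem_Icc.2 hpw.le)).mono_left (nhdsWithin_mono _ ?_)
      exact fun z hz => ⟨hz.1.le, hz.2.le.trans (by linarith)⟩
    have htd : Tendsto (fun u => (g q - g u)/(q - u)) (𝓝[Ioo p q] p)
        (𝓝 ((g q - g p)/(q - p))) := by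
      apply Filter.Tendsto.div (tendsto_const_nhds.sub hgp)
        (tendsto_const_nhds.sub (tendsto_id.mono_left nhdsWithin_le_nhds))
      exact sub_ne_zero.2 hpq.ne'
    exact ge_of_tendsto htd (eventually_nhdsWithin_of_forall hev)
  have c2 : (g r - g m)/(r - m) < (g m - g q)/(m - q) :=
    hst.slope_anti_adjacent hqmem hrmem hqm hmr
  have c3 : (g w - g r)/(w - r) ≤ (g r - g m)/(r - m) := by
    have hev : ∀ v ∈ Ioo r w, (g v - g r)/(v - r) ≤ (g r - g m)/(r - m) := by
      intro v hv
      exact hconc.slope_anti_adjacent hmmem ⟨by linarith [hrmem.1, hv.1],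
        lt_of_lt_of_le hv.2 hwβ⟩ hmr hv.1
    have hne : (𝓝[Ioo r w] w).NeBot := by
      apply mem_closure_iff_nhdsWithin_neBot.1
      rw [closure_Ioo hrw.ne]
      exact right_mem_Icc.2 hrw.le
    have hgw : Tendsto g (𝓝[Ioo r w] w) (𝓝 (g w)) := by
      refine (hcont w (right_mem_Icc.2 hpw.le)).mono_left (nhdsWithin_mono _ ?_)
      exact fun z hz => ⟨by linarith [hz.1], hz.2.le⟩
    have htd : Tendsto (fun v => (g v - g r)/(v - r)) (𝓝[Ioo r w] w)
        (𝓝 ((g w - g r)/(w - r))) := by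
      apply Filter.Tendsto.div ((hgw).sub tendsto_const_nhds)
        ((tendsto_id.mono_left nhdsWithin_le_nhds).sub tendsto_const_nhds)
      exact sub_ne_zero.2 hrw.ne'
    exact le_of_tendsto htd (eventually_nhdsWithin_of_forall hev)
  have chain : (g w - g r)/(w - r) < (g q - g p)/(q - p) := c3.trans_lt (c2.trans_le c1)
  rwa [div_lt_div_iff₀ (by linarith) (by linarith)] at chain

lemma finite_parts {ν₁ ν₂ : ℝ} (hν₁ : 0 < ν₁) (hν₂ : 0 < ν₂) {J K : ℝ → EReal} {t c₁ c₂ : ℝ}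
    (h : J t + ((ν₁:EReal) * K (t - c₁) + (ν₂:EReal) * K (t - c₂)) ≠ ⊥) :
    J t ≠ ⊥ ∧ K (t - c₁) ≠ ⊥ ∧ K (t - c₂) ≠ ⊥ := by
  refine ⟨?_, ?_, ?_⟩ <;> intro hb <;> apply h
  · rw [hb, EReal.bot_add]
  · rw [hb, EReal.coe_mul_bot_of_pos hν₁, EReal.bot_add, EReal.add_bot]
  · rw [hb, EReal.coe_mul_bot_of_pos hν₂, EReal.add_bot, EReal.add_bot]

lemma eval_coe (ν₁ ν₂ : ℝ) {j k1 k2 : EReal} (hj1 : j ≠ ⊤) (hj2 : j ≠ ⊥)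
    (hk11 : k1 ≠ ⊤) (hk12 : k1 ≠ ⊥) (hk21 : k2 ≠ ⊤) (hk22 : k2 ≠ ⊥) :
    j + ((ν₁:EReal) * k1 + (ν₂:EReal) * k2)
      = ((j.toReal + (ν₁ * k1.toReal + ν₂ * k2.toReal) : ℝ) : EReal) := by
  lift j to ℝ using ⟨hj1, hj2⟩
  lift k1 to ℝ using ⟨hk11, hk12⟩
  lift k2 to ℝ using ⟨hk21, hk22⟩
  rw [← EReal.coe_mul, ← EReal.coe_mul, ← EReal.coe_add, ← EReal.coe_add]
  simp

lemma toReal_lt' {u v : EReal} (h : u < v) (hu : u ≠ ⊥) (hv : v ≠ ⊤) :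
    u.toReal < v.toReal := by
  lift u to ℝ using ⟨ne_top_of_lt h, hu⟩
  lift v to ℝ using ⟨hv, ne_bot_of_gt h⟩
  simpa using EReal.coe_lt_coe_iff.1 h

lemma F_usc_max {ν₁ ν₂ : ℝ} (hν₁ : 0 < ν₁) (hν₂ : 0 < ν₂) {K J : ℝ → EReal}
    (hK : KernelFun K) (hJtop : ∀ t, J t ≠ ⊤)
    (hJusc : UpperSemicontinuousOn J (Icc (0:ℝ) 1))
    {c₁ c₂ : ℝ} (hc₁ : c₁ ∈ Icc (0:ℝ) 1) (hc₂ : c₂ ∈ Icc (0:ℝ) 1)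
    {u v : ℝ} (huv : u ≤ v) (hsub : Icc u v ⊆ Icc (0:ℝ) 1) :
    ∃ a ∈ Icc u v, ∀ t ∈ Icc u v,
      J t + ((ν₁:EReal) * K (t - c₁) + (ν₂:EReal) * K (t - c₂)) ≤
      J a + ((ν₁:EReal) * K (a - c₁) + (ν₂:EReal) * K (a - c₂)) := by
  have hKc := K_contOn hK
  have hmap : ∀ c ∈ Icc (0:ℝ) 1, ∀ t ∈ Icc u v, t - c ∈ Icc (-1:ℝ) 1 := by
    intro c hc t ht
    have := hsub ht
    exact ⟨by linarith [this.1, hc.2], by linarith [this.2, hc.1]⟩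
  have h1 : ∀ t ∈ Icc u v,
      ContinuousWithinAt (fun t => (ν₁:EReal) * K (t - c₁)) (Icc u v) t := by
    intro t ht
    have hc : ContinuousWithinAt (fun t => K (t - c₁)) (Icc u v) t :=
      (hKc.comp ((continuous_id.sub continuous_const).continuousOn)
        (fun z hz => hmap c₁ hc₁ z hz)) t ht
    exact (contMul hν₁).continuousAt.comp_continuousWithinAt hc
  have h2 : ∀ t ∈ Icc u v,
      ContinuousWithinAt (fun t => (ν₂:EReal) * K (t - c₂)) (Icc u v) t := by
    intro t ht
    have hc : ContinuousWithinAt (fun t => K (t - c₂)) (Icc u v) t :=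
      (hKc.comp ((continuous_id.sub continuous_const).continuousOn)
        (fun z hz => hmap c₂ hc₂ z hz)) t ht
    exact (contMul hν₂).continuousAt.comp_continuousWithinAt hc
  have hGcont : ∀ t ∈ Icc u v,
      ContinuousWithinAt (fun t => (ν₁:EReal) * K (t - c₁) + (ν₂:EReal) * K (t - c₂))
        (Icc u v) t := by
    intro t ht
    have hadd : ContinuousAt (fun p : EReal × EReal => p.1 + p.2)
        ((ν₁:EReal) * K (t - c₁), (ν₂:EReal) * K (t - c₂)) :=
      EReal.continuousAt_add (Or.inl (mulK_ne_top hν₁ (hK.1 _)))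
        (Or.inr (mulK_ne_top hν₂ (hK.1 _)))
    have hp := (h1 t ht).prodMk (h2 t ht)
    exact ContinuousAt.comp_continuousWithinAt
      (f := fun t => ((ν₁:EReal) * K (t - c₁), (ν₂:EReal) * K (t - c₂))) hadd hp
  have hFusc : UpperSemicontinuousOn
      (fun t => J t + ((ν₁:EReal) * K (t - c₁) + (ν₂:EReal) * K (t - c₂))) (Icc u v) := by
    intro t ht
    have hGneTop : ((ν₁:EReal) * K (t - c₁) + (ν₂:EReal) * K (t - c₂)) ≠ ⊤ :=
      (EReal.add_lt_top (mulK_ne_top hν₁ (hK.1 _)) (mulK_ne_top hν₂ (hK.1 _))).ne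
    exact UpperSemicontinuousWithinAt.add' ((hJusc.mono hsub) t ht)
      ((hGcont t ht).upperSemicontinuousWithinAt)
      (EReal.continuousAt_add (Or.inl (hJtop t)) (Or.inr hGneTop))
  exact usc_exists_max isCompact_Icc (nonempty_Icc.2 huv) hFusc


/-- The `n = 2` case with `x₁ < y₁ < y₂ < x₂`: then `m₁(y) < m₁(x)`, and moreover
`m₀(x) < m₀(y)` or `m₂(x) < m₂(y)`; in particular intertwining of maxima holds. -/
theorem two_nodes_intertwining (ν₁ ν₂ : ℝ) (hν₁ : 0 < ν₁) (hν₂ : 0 < ν₂)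
    (K J : ℝ → EReal) (hK : KernelFun K) (hSC : KStrictConcave K) (hSM : KStrictMonotone K)
    (hJ : NFieldFun 2 J) (hJusc : UpperSemicontinuousOn J (Icc (0:ℝ) 1))
    (x₁ x₂ y₁ y₂ : ℝ) (h0 : 0 ≤ x₁) (h1 : x₁ < y₁) (h2 : y₁ < y₂) (h3 : y₂ < x₂)
    (h4 : x₂ ≤ 1)
    (hxr : regularNodes 2 ![ν₁, ν₂] K J ![x₁, x₂])
    (hyr : regularNodes 2 ![ν₁, ν₂] K J ![y₁, y₂]) :
    intMax 2 ![ν₁, ν₂] K J ![y₁, y₂] 1 < intMax 2 ![ν₁, ν₂] K J ![x₁, x₂] 1 ∧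
      (intMax 2 ![ν₁, ν₂] K J ![x₁, x₂] 0 < intMax 2 ![ν₁, ν₂] K J ![y₁, y₂] 0 ∨
        intMax 2 ![ν₁, ν₂] K J ![x₁, x₂] 2 < intMax 2 ![ν₁, ν₂] K J ![y₁, y₂] 2) := by
  have hKtop := hK.1
  have hKbot := hK.2.1
  have hJtop := hJ.1
  have hsum : ∀ a b : ℝ, sumTrans 2 ![ν₁, ν₂] K J ![a, b]
      = fun t => J t + ((ν₁:EReal) * K (t - a) + (ν₂:EReal) * K (t - b)) := by
    intro a b; funext t; simp [sumTrans, Fin.sum_univ_two]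
  have hm0 : ∀ a b : ℝ, intMax 2 ![ν₁, ν₂] K J ![a, b] 0
      = sSup ((fun t => J t + ((ν₁:EReal) * K (t - a) + (ν₂:EReal) * K (t - b))) '' Icc 0 a) := by
    intro a b; rw [intMax, hsum]; rfl
  have hm1 : ∀ a b : ℝ, intMax 2 ![ν₁, ν₂] K J ![a, b] 1
      = sSup ((fun t => J t + ((ν₁:EReal) * K (t - a) + (ν₂:EReal) * K (t - b))) '' Icc a b) := by
    intro a b; rw [intMax, hsum]; rfl
  have hm2 : ∀ a b : ℝ, intMax 2 ![ν₁, ν₂] K J ![a, b] 2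
      = sSup ((fun t => J t + ((ν₁:EReal) * K (t - a) + (ν₂:EReal) * K (t - b))) '' Icc b 1) := by
    intro a b; rw [intMax, hsum]; rfl
  -- Part 1
  obtain ⟨t0, ht0m, ht0max⟩ := F_usc_max hν₁ hν₂ hK hJtop hJusc (c₁ := y₁) (c₂ := y₂)
    ⟨by linarith, by linarith⟩ ⟨by linarith, by linarith⟩ h2.le
    (fun z hz => ⟨by linarith [hz.1], by linarith [hz.2]⟩)
  have ht01 : y₁ ≤ t0 := ht0m.1
  have ht02 : t0 ≤ y₂ := ht0m.2
  have hm1y : intMax 2 ![ν₁, ν₂] K J ![y₁, y₂] 1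
      = J t0 + ((ν₁:EReal) * K (t0 - y₁) + (ν₂:EReal) * K (t0 - y₂)) := by
    rw [hm1]
    refine le_antisymm (sSup_le ?_) (le_sSup ⟨t0, ht0m, rfl⟩)
    rintro z ⟨t, ht, rfl⟩
    exact ht0max t ht
  have hne1 : J t0 + ((ν₁:EReal) * K (t0 - y₁) + (ν₂:EReal) * K (t0 - y₂)) ≠ ⊥ := by
    rw [← hm1y]; exact hyr 1
  obtain ⟨hJt0, hKy1, hKy2⟩ := finite_parts hν₁ hν₂ hne1
  have hKx1 : K (t0 - x₁) ≠ ⊥ := hKbot _ (Or.inr ⟨by linarith, by linarith⟩)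
  have hKx2 : K (t0 - x₂) ≠ ⊥ := hKbot _ (Or.inl ⟨by linarith, by linarith⟩)
  have hA : K (t0 - y₁) < K (t0 - x₁) := by
    rcases eq_or_lt_of_le ht01 with he | hlt
    · have e : t0 - y₁ = 0 := by rw [← he]; ring
      rw [e]
      exact K0_lt_pos hK hSM ⟨by linarith, by linarith⟩
    · exact hSM.2 ⟨by linarith, by linarith⟩ ⟨by linarith, by linarith⟩ (by linarith)
  have hB : K (t0 - y₂) ≤ K (t0 - x₂) := by
    rcases eq_or_lt_of_le ht02 with he | hlt
    · have e : t0 - y₂ = 0 := by rw [he]; ring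
      rw [e]
      exact K0_le_neg hK hSM ⟨by linarith, by linarith⟩
    · exact (hSM.1 ⟨by linarith, by linarith⟩ ⟨by linarith, by linarith⟩ (by linarith)).le
  have hstep : J t0 + ((ν₁:EReal) * K (t0 - y₁) + (ν₂:EReal) * K (t0 - y₂))
      < J t0 + ((ν₁:EReal) * K (t0 - x₁) + (ν₂:EReal) * K (t0 - x₂)) := by
    rw [eval_coe ν₁ ν₂ (hJtop t0) hJt0 (hKtop _) hKy1 (hKtop _) hKy2,
        eval_coe ν₁ ν₂ (hJtop t0) hJt0 (hKtop _) hKx1 (hKtop _) hKx2,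
        EReal.coe_lt_coe_iff]
    have r1 : (K (t0 - y₁)).toReal < (K (t0 - x₁)).toReal := toReal_lt' hA hKy1 (hKtop _)
    have r2 : (K (t0 - y₂)).toReal ≤ (K (t0 - x₂)).toReal :=
      EReal.toReal_le_toReal hB hKy2 (hKtop _)
    have m1 := mul_lt_mul_of_pos_left r1 hν₁
    have m2 := mul_le_mul_of_nonneg_left r2 hν₂.le
    linarith
  have part1 : intMax 2 ![ν₁, ν₂] K J ![y₁, y₂] 1 < intMax 2 ![ν₁, ν₂] K J ![x₁, x₂] 1 := by
    rw [hm1y, hm1]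
    exact lt_of_lt_of_le hstep (le_sSup ⟨t0, ⟨by linarith, by linarith⟩, rfl⟩)
  refine ⟨part1, ?_⟩
  by_contra hcon
  push_neg at hcon
  obtain ⟨hc0, hc2⟩ := hcon
  -- maximizer a of F(x,·) on [0,x₁]
  obtain ⟨a, ham, hamax⟩ := F_usc_max hν₁ hν₂ hK hJtop hJusc (c₁ := x₁) (c₂ := x₂)
    ⟨h0, by linarith⟩ ⟨by linarith, h4⟩ h0 (fun z hz => ⟨hz.1, by linarith [hz.2]⟩)
  have ham1 : 0 ≤ a := ham.1
  have ham2 : a ≤ x₁ := ham.2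
  have hm0x : intMax 2 ![ν₁, ν₂] K J ![x₁, x₂] 0
      = J a + ((ν₁:EReal) * K (a - x₁) + (ν₂:EReal) * K (a - x₂)) := by
    rw [hm0]
    refine le_antisymm (sSup_le ?_) (le_sSup ⟨a, ham, rfl⟩)
    rintro z ⟨t, ht, rfl⟩
    exact hamax t ht
  have hnea : J a + ((ν₁:EReal) * K (a - x₁) + (ν₂:EReal) * K (a - x₂)) ≠ ⊥ := by
    rw [← hm0x]; exact hxr 0
  obtain ⟨hJa, hKax1, hKax2⟩ := finite_parts hν₁ hν₂ hnea
  have hKay1 : K (a - y₁) ≠ ⊥ := hKbot _ (Or.inl ⟨by linarith, by linarith⟩)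
  have hKay2 : K (a - y₂) ≠ ⊥ := hKbot _ (Or.inl ⟨by linarith, by linarith⟩)
  have hFya_le : J a + ((ν₁:EReal) * K (a - y₁) + (ν₂:EReal) * K (a - y₂))
      ≤ J a + ((ν₁:EReal) * K (a - x₁) + (ν₂:EReal) * K (a - x₂)) := by
    calc J a + ((ν₁:EReal) * K (a - y₁) + (ν₂:EReal) * K (a - y₂))
        ≤ sSup ((fun t => J t + ((ν₁:EReal) * K (t - y₁) + (ν₂:EReal) * K (t - y₂))) '' Icc 0 y₁) :=
          le_sSup ⟨a, ⟨ham1, by linarith⟩, rfl⟩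
      _ = intMax 2 ![ν₁, ν₂] K J ![y₁, y₂] 0 := (hm0 y₁ y₂).symm
      _ ≤ intMax 2 ![ν₁, ν₂] K J ![x₁, x₂] 0 := hc0
      _ = _ := hm0x
  have h1R : ν₁ * (K (a - y₁)).toReal + ν₂ * (K (a - y₂)).toReal
      ≤ ν₁ * (K (a - x₁)).toReal + ν₂ * (K (a - x₂)).toReal := by
    rw [eval_coe ν₁ ν₂ (hJtop a) hJa (hKtop _) hKay1 (hKtop _) hKay2,
        eval_coe ν₁ ν₂ (hJtop a) hJa (hKtop _) hKax1 (hKtop _) hKax2,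
        EReal.coe_le_coe_iff] at hFya_le
    linarith
  -- maximizer b of F(x,·) on [x₂,1]
  obtain ⟨b, hbm, hbmax⟩ := F_usc_max hν₁ hν₂ hK hJtop hJusc (c₁ := x₁) (c₂ := x₂)
    ⟨h0, by linarith⟩ ⟨by linarith, h4⟩ h4 (fun z hz => ⟨by linarith [hz.1], hz.2⟩)
  have hbm1 : x₂ ≤ b := hbm.1
  have hbm2 : b ≤ 1 := hbm.2
  have hm2x : intMax 2 ![ν₁, ν₂] K J ![x₁, x₂] 2
      = J b + ((ν₁:EReal) * K (b - x₁) + (ν₂:EReal) * K (b - x₂)) := by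
    rw [hm2]
    refine le_antisymm (sSup_le ?_) (le_sSup ⟨b, hbm, rfl⟩)
    rintro z ⟨t, ht, rfl⟩
    exact hbmax t ht
  have hneb : J b + ((ν₁:EReal) * K (b - x₁) + (ν₂:EReal) * K (b - x₂)) ≠ ⊥ := by
    rw [← hm2x]; exact hxr 2
  obtain ⟨hJb, hKbx1, hKbx2⟩ := finite_parts hν₁ hν₂ hneb
  have hKby1 : K (b - y₁) ≠ ⊥ := hKbot _ (Or.inr ⟨by linarith, by linarith⟩)
  have hKby2 : K (b - y₂) ≠ ⊥ := hKbot _ (Or.inr ⟨by linarith, by linarith⟩)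
  have hFyb_le : J b + ((ν₁:EReal) * K (b - y₁) + (ν₂:EReal) * K (b - y₂))
      ≤ J b + ((ν₁:EReal) * K (b - x₁) + (ν₂:EReal) * K (b - x₂)) := by
    calc J b + ((ν₁:EReal) * K (b - y₁) + (ν₂:EReal) * K (b - y₂))
        ≤ sSup ((fun t => J t + ((ν₁:EReal) * K (t - y₁) + (ν₂:EReal) * K (t - y₂))) '' Icc y₂ 1) :=
          le_sSup ⟨b, ⟨by linarith, hbm2⟩, rfl⟩
      _ = intMax 2 ![ν₁, ν₂] K J ![y₁, y₂] 2 := (hm2 y₁ y₂).symm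
      _ ≤ intMax 2 ![ν₁, ν₂] K J ![x₁, x₂] 2 := hc2
      _ = _ := hm2x
  have h2R : ν₁ * (K (b - y₁)).toReal + ν₂ * (K (b - y₂)).toReal
      ≤ ν₁ * (K (b - x₁)).toReal + ν₂ * (K (b - x₂)).toReal := by
    rw [eval_coe ν₁ ν₂ (hJtop b) hJb (hKtop _) hKby1 (hKtop _) hKby2,
        eval_coe ν₁ ν₂ (hJtop b) hJb (hKtop _) hKbx1 (hKtop _) hKbx2,
        EReal.coe_le_coe_iff] at hFyb_le
    linarith
  -- strict pointwise inequalities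
  have pA1 : K (a - x₁) < K (a - y₁) := by
    rcases eq_or_lt_of_le ham2 with he | hlt
    · have e : a - x₁ = 0 := by rw [he]; ring
      rw [e]
      exact K0_lt_neg hK hSM ⟨by linarith, by linarith⟩
    · exact hSM.1 ⟨by linarith, by linarith⟩ ⟨by linarith, by linarith⟩ (by linarith)
  have pA2 : K (a - y₂) < K (a - x₂) :=
    hSM.1 ⟨by linarith, by linarith⟩ ⟨by linarith, by linarith⟩ (by linarith)
  have pB1 : K (b - y₁) < K (b - x₁) :=
    hSM.2 ⟨by linarith, by linarith⟩ ⟨by linarith, by linarith⟩ (by linarith)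
  have pB2 : K (b - x₂) < K (b - y₂) := by
    rcases eq_or_lt_of_le hbm1 with he | hlt
    · have e : b - x₂ = 0 := by rw [← he]; ring
      rw [e]
      exact K0_lt_pos hK hSM ⟨by linarith, by linarith⟩
    · exact hSM.2 ⟨by linarith, by linarith⟩ ⟨by linarith, by linarith⟩ (by linarith)
  have rA1 : (K (a - x₁)).toReal < (K (a - y₁)).toReal := toReal_lt' pA1 hKax1 (hKtop _)
  have rA2 : (K (a - y₂)).toReal < (K (a - x₂)).toReal := toReal_lt' pA2 hKay2 (hKtop _)
  have rB1 : (K (b - y₁)).toReal < (K (b - x₁)).toReal := toReal_lt' pB1 hKby1 (hKtop _)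
  have rB2 : (K (b - x₂)).toReal < (K (b - y₂)).toReal := toReal_lt' pB2 hKbx2 (hKtop _)
  -- slope inequalities
  have hfinNeg : ∀ s ∈ Icc (a - x₂) (a - x₁), K s ≠ ⊥ := by
    intro s hs
    rcases eq_or_lt_of_le hs.1 with he | hlt
    · rwa [← he]
    · rcases eq_or_lt_of_le hs.2 with he2 | hlt2
      · rwa [he2]
      · exact hKbot _ (Or.inl ⟨by linarith, by linarith⟩)
  have hsubNeg : Icc (a - x₂) (a - x₁) ⊆ Icc (-1:ℝ) 0 :=
    fun z hz => ⟨by linarith [hz.1], by linarith [hz.2]⟩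
  have hcontNeg : ContinuousOn (fun s => (K s).toReal) (Icc (a - x₂) (a - x₁)) := by
    intro s hs
    have hKcw : ContinuousWithinAt K (Icc (a - x₂) (a - x₁)) s :=
      (hK.2.2.2.2.1.mono hsubNeg) s hs
    exact (EReal.tendsto_toReal (hKtop _) (hfinNeg s hs)).comp hKcw
  have slopeNeg := slope_gap (α := -1) (β := 0)
    (show (-1:ℝ) ≤ a - x₂ by linarith) (show a - x₁ ≤ 0 by linarith)
    (show a - x₂ < a - y₂ by linarith) (show a - y₂ < a - y₁ by linarith)
    (show a - y₁ < a - x₁ by linarith) hSC.1 hcontNeg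
  have hfinPos : ∀ s ∈ Icc (b - x₂) (b - x₁), K s ≠ ⊥ := by
    intro s hs
    rcases eq_or_lt_of_le hs.1 with he | hlt
    · rwa [← he]
    · rcases eq_or_lt_of_le hs.2 with he2 | hlt2
      · rwa [he2]
      · exact hKbot _ (Or.inr ⟨by linarith, by linarith⟩)
  have hsubPos : Icc (b - x₂) (b - x₁) ⊆ Icc (0:ℝ) 1 :=
    fun z hz => ⟨by linarith [hz.1], by linarith [hz.2]⟩
  have hcontPos : ContinuousOn (fun s => (K s).toReal) (Icc (b - x₂) (b - x₁)) := by
    intro s hs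
    have hKcw : ContinuousWithinAt K (Icc (b - x₂) (b - x₁)) s :=
      (hK.2.2.2.2.2.mono hsubPos) s hs
    exact (EReal.tendsto_toReal (hKtop _) (hfinPos s hs)).comp hKcw
  have slopePos := slope_gap (α := 0) (β := 1)
    (show (0:ℝ) ≤ b - x₂ by linarith) (show b - x₁ ≤ 1 by linarith)
    (show b - x₂ < b - y₂ by linarith) (show b - y₂ < b - y₁ by linarith)
    (show b - y₁ < b - x₁ by linarith) hSC.2 hcontPos
  -- final contradiction
  set pa1 := (K (a - x₁)).toReal
  set pa2 := (K (a - x₂)).toReal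
  set qa1 := (K (a - y₁)).toReal
  set qa2 := (K (a - y₂)).toReal
  set pb1 := (K (b - x₁)).toReal
  set pb2 := (K (b - x₂)).toReal
  set qb1 := (K (b - y₁)).toReal
  set qb2 := (K (b - y₂)).toReal
  have sn : (pa2 - qa2) * (y₁ - x₁) < (qa1 - pa1) * (x₂ - y₂) := by linarith [slopeNeg]
  have sp : (pb1 - qb1) * (x₂ - y₂) < (qb2 - pb2) * (y₁ - x₁) := by linarith [slopePos]
  have e1 : ν₁ * (qa1 - pa1) ≤ ν₂ * (pa2 - qa2) := by linarith
  have e2 : ν₂ * (qb2 - pb2) ≤ ν₁ * (pb1 - qb1) := by linarith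
  have hL : ν₁ * (y₁ - x₁) < ν₂ * (x₂ - y₂) := by
    by_contra hcc
    push_neg at hcc
    have c1 : ν₁ * (qa1 - pa1) * (y₁ - x₁) ≤ ν₂ * (pa2 - qa2) * (y₁ - x₁) :=
      mul_le_mul_of_nonneg_right e1 (by linarith)
    have c2 : ν₂ * ((pa2 - qa2) * (y₁ - x₁)) < ν₂ * ((qa1 - pa1) * (x₂ - y₂)) :=
      mul_lt_mul_of_pos_left sn hν₂
    have c3 : (qa1 - pa1) * (ν₂ * (x₂ - y₂)) ≤ (qa1 - pa1) * (ν₁ * (y₁ - x₁)) :=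
      mul_le_mul_of_nonneg_left hcc (by linarith)
    linarith [c1, c2, c3]
  have hR : ν₂ * (x₂ - y₂) < ν₁ * (y₁ - x₁) := by
    by_contra hcc
    push_neg at hcc
    have c1 : ν₂ * (qb2 - pb2) * (x₂ - y₂) ≤ ν₁ * (pb1 - qb1) * (x₂ - y₂) :=
      mul_le_mul_of_nonneg_right e2 (by linarith)
    have c2 : ν₁ * ((pb1 - qb1) * (x₂ - y₂)) < ν₁ * ((qb2 - pb2) * (y₁ - x₁)) :=
      mul_lt_mul_of_pos_left sp hν₁
    have c3 : (qb2 - pb2) * (ν₁ * (y₁ - x₁)) ≤ (qb2 - pb2) * (ν₂ * (x₂ - y₂)) :=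
      mul_le_mul_of_nonneg_left hcc (by linarith)
    linarith [c1, c2, c3]
  linarith
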